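/- For every LRSM instance that admits a feasible matching, there exists an l-stable matching: a feasible matching with no blocking pair (s, p) where s is collocated with the students matched to p. Moreover such a matching can be obtained by taking a feasible matching M, partitioning agents by location under M, and computing a stable matching within each location's induced admissions subproblem. -/

import Mathlib

open Finset
open scoped Classical

/-- A feasible matching of an LRSM instance: every project `p` receives exactly
`cap p` students and students at the same project are collocated. -/
def Feasible {S P L : Type*} [Fintype S] (loc : S → L) (cap : P → ℕ) (M : S → P) : Prop :=
  (∀ p, (Finset.univ.filter fun s => M s = p).card = cap p) ∧
  ∀ s t, M s = M t → loc s = loc t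

/-- A blocking pair: `s` prefers `p` to its match and `p` prefers `s` to one of its
matched students (lower rank = more preferred). -/
def BlockingPair {S P : Type*} (sRank : S → P → ℕ) (pRank : P → S → ℕ)
    (M : S → P) (s : S) (p : P) : Prop :=
  sRank s p < sRank s (M s) ∧ ∃ t, M t = p ∧ pRank p s < pRank p t



section TopK

set_option linter.unusedSectionVars false

variable {S : Type*} {A : Finset S} {f : S → ℕ} {c : ℕ}

lemma cnt_lt_cnt (hf : Set.InjOn f A) {a b : S} (ha : a ∈ A) (hb : b ∈ A)
    (hab : f a < f b) :
    (A.filter fun u => f u < f a).card < (A.filter fun u => f u < f b).card := by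
  apply Finset.card_lt_card
  have hsub : (A.filter fun u => f u < f a) ⊆ (A.filter fun u => f u < f b) := by
    intro u hu
    rcases Finset.mem_filter.1 hu with ⟨h1, h2⟩
    exact Finset.mem_filter.2 ⟨h1, lt_trans h2 hab⟩
  rw [Finset.ssubset_iff_of_subset hsub]
  exact ⟨a, Finset.mem_filter.2 ⟨ha, hab⟩,
    fun hcon => absurd ((Finset.mem_filter.1 hcon).2) (lt_irrefl _)⟩

lemma cnt_injOn (hf : Set.InjOn f A) :
    Set.InjOn (fun t => (A.filter fun u => f u < f t).card) A := by
  intro a ha b hb h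
  by_contra hne
  rcases lt_trichotomy (f a) (f b) with h1 | h1 | h1
  · exact absurd h (Nat.ne_of_lt (cnt_lt_cnt hf ha hb h1))
  · exact hne (hf ha hb h1)
  · exact absurd h.symm (Nat.ne_of_lt (cnt_lt_cnt hf hb ha h1))

lemma cnt_le {a : S} (ha : a ∈ A) : (A.filter fun u => f u < f a).card ≤ A.card - 1 := by
  have hsub : (A.filter fun u => f u < f a) ⊆ A.erase a := by
    intro u hu
    rcases Finset.mem_filter.1 hu with ⟨h1, h2⟩
    exact Finset.mem_erase.2 ⟨fun he => absurd h2 (by rw [he]; exact lt_irrefl _), h1⟩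
  calc (A.filter fun u => f u < f a).card ≤ (A.erase a).card := Finset.card_le_card hsub
    _ = A.card - 1 := Finset.card_erase_of_mem ha

lemma topk_card_le (hf : Set.InjOn f A) :
    (A.filter fun t => (A.filter fun u => f u < f t).card < c).card ≤ c := by
  have := Finset.card_le_card_of_injOn (t := Finset.range c)
    (fun t => (A.filter fun u => f u < f t).card)
    (fun a ha => Finset.mem_range.2 (Finset.mem_filter.1 ha).2)
    (fun a ha b hb h =>
      cnt_injOn hf (Finset.mem_filter.1 ha).1 (Finset.mem_filter.1 hb).1 h)
  simpa using this

lemma topk_card_ge (hf : Set.InjOn f A) (h : c ≤ A.card) :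
    c ≤ (A.filter fun t => (A.filter fun u => f u < f t).card < c).card := by
  set K := A.filter fun t => (A.filter fun u => f u < f t).card < c with hK
  have hKsub : K ⊆ A := Finset.filter_subset _ _
  have hRj : A.filter (fun t => ¬ ((A.filter fun u => f u < f t).card < c)) = A \ K := by
    rw [hK, Finset.filter_not]
  have hcard : (A \ K).card ≤ A.card - c := by
    rw [← hRj, ← Finset.card_range (A.card - c)]
    apply Finset.card_le_card_of_injOn (t := Finset.range (A.card - c))
      (fun t => (A.filter fun u => f u < f t).card - c)
    · intro a ha
      rcases Finset.mem_filter.1 ha with ⟨haA, hac⟩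
      have h1 := cnt_le (f := f) haA
      have h2 : c ≤ (A.filter fun u => f u < f a).card := Nat.le_of_not_lt hac
      have h3 : A.card ≠ 0 := Finset.card_ne_zero_of_mem haA
      exact Finset.mem_range.2 (by beta_reduce; omega)
    · intro a ha b hb heq
      rcases Finset.mem_filter.1 ha with ⟨haA, hac⟩
      rcases Finset.mem_filter.1 hb with ⟨hbA, hbc⟩
      have h2a : c ≤ (A.filter fun u => f u < f a).card := Nat.le_of_not_lt hac
      have h2b : c ≤ (A.filter fun u => f u < f b).card := Nat.le_of_not_lt hbc
      have heq' : (A.filter fun u => f u < f a).card - c = (A.filter fun u => f u < f b).card - c := heq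
      apply cnt_injOn hf haA hbA
      show (A.filter fun u => f u < f a).card = (A.filter fun u => f u < f b).card
      omega
  have := Finset.card_sdiff_add_card_eq_card hKsub
  omega

lemma topk_better (hf : Set.InjOn f A) {v : ℕ}
    (h : c ≤ (A.filter fun u => f u < v).card) :
    ∀ t ∈ A.filter fun t => (A.filter fun u => f u < f t).card < c, f t < v := by
  intro t ht
  rcases Finset.mem_filter.1 ht with ⟨htA, htc⟩
  by_contra hge
  have hge' : v ≤ f t := Nat.le_of_not_lt hge
  have hsub : (A.filter fun u => f u < v) ⊆ (A.filter fun u => f u < f t) := by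
    intro u hu
    rcases Finset.mem_filter.1 hu with ⟨h1, h2⟩
    exact Finset.mem_filter.2 ⟨h1, lt_of_lt_of_le h2 hge'⟩
  have := Finset.card_le_card hsub
  omega

end TopK

section GS

set_option linter.unusedSectionVars false

variable {S P : Type*} [Fintype S] [Nonempty P]
variable (Ps : Finset P) (cap : P → ℕ) (r : S → P → ℕ) (q : P → S → ℕ)

/-- Projects still available to student `s` (not yet rejected). -/
noncomputable def gsAvail (R : Finset (S × P)) (s : S) : Finset P :=
  Ps.filter fun p => (s, p) ∉ R

/-- The project `s` currently proposes to: his favorite available project. -/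
noncomputable def gsTarget (R : Finset (S × P)) (s : S) : P :=
  if h : (gsAvail Ps R s).Nonempty then
    Classical.choose ((gsAvail Ps R s).exists_min_image (r s) h)
  else Classical.arbitrary P

lemma gsTarget_spec {R : Finset (S × P)} {s : S} (h : (gsAvail Ps R s).Nonempty) :
    gsTarget Ps r R s ∈ gsAvail Ps R s ∧
      ∀ p ∈ gsAvail Ps R s, r s (gsTarget Ps r R s) ≤ r s p := by
  rw [gsTarget, dif_pos h]
  exact Classical.choose_spec ((gsAvail Ps R s).exists_min_image (r s) h)

/-- Students currently proposing to `p`. -/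
noncomputable def gsProposers (R : Finset (S × P)) (p : P) : Finset S :=
  Finset.univ.filter fun t => (gsAvail Ps R t).Nonempty ∧ gsTarget Ps r R t = p

/-- The `cap p` best proposers, which `p` tentatively keeps. -/
noncomputable def gsKeep (R : Finset (S × P)) (p : P) : Finset S :=
  (gsProposers Ps r R p).filter fun t =>
    ((gsProposers Ps r R p).filter fun u => q p u < q p t).card < cap p

/-- One round: add all new rejections. -/
noncomputable def gsStep (R : Finset (S × P)) : Finset (S × P) :=
  R ∪ (Finset.univ.filter fun s : S => (gsAvail Ps R s).Nonempty ∧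
        s ∉ gsKeep Ps cap r q R (gsTarget Ps r R s)).image
      fun s => (s, gsTarget Ps r R s)

/-- The key invariant: every rejection is justified by `cap p` better proposers. -/
def gsJ (R : Finset (S × P)) : Prop :=
  ∀ s p, (s, p) ∈ R →
    cap p ≤ ((gsProposers Ps r R p).filter fun t => q p t < q p s).card

lemma gsStep_mem {R : Finset (S × P)} {s : S} {p : P} :
    (s, p) ∈ gsStep Ps cap r q R ↔ (s, p) ∈ R ∨
      ((gsAvail Ps R s).Nonempty ∧ gsTarget Ps r R s = p ∧
        s ∉ gsKeep Ps cap r q R p) := by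
  rw [gsStep, Finset.mem_union]
  constructor
  · rintro (h | h)
    · exact Or.inl h
    · rcases Finset.mem_image.1 h with ⟨t, ht, hpair⟩
      rcases Finset.mem_filter.1 ht with ⟨-, h1, h2⟩
      obtain ⟨rfl, rfl⟩ : t = s ∧ gsTarget Ps r R t = p := by
        constructor
        · exact congrArg Prod.fst hpair
        · exact congrArg Prod.snd hpair
      exact Or.inr ⟨h1, rfl, h2⟩
  · rintro (h | ⟨h1, h2, h3⟩)
    · exact Or.inl h
    · refine Or.inr (Finset.mem_image.2 ⟨s, Finset.mem_filter.2 ⟨Finset.mem_univ _, h1, ?_⟩, by rw [h2]⟩)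
      rw [h2]; exact h3

lemma gsSubset_step (R : Finset (S × P)) : R ⊆ gsStep Ps cap r q R :=
  Finset.subset_union_left

lemma gsAvail_anti {R : Finset (S × P)} {s : S} :
    gsAvail Ps (gsStep Ps cap r q R) s ⊆ gsAvail Ps R s := by
  intro p hp
  rcases Finset.mem_filter.1 hp with ⟨h1, h2⟩
  exact Finset.mem_filter.2 ⟨h1, fun hc => h2 (gsSubset_step Ps cap r q R hc)⟩

lemma gsKeep_proposes (hr : ∀ s, Set.InjOn (r s) Ps) {R : Finset (S × P)} {p : P}
    {t : S} (ht : t ∈ gsKeep Ps cap r q R p) :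
    t ∈ gsProposers Ps r (gsStep Ps cap r q R) p := by
  rcases Finset.mem_filter.1 ht with ⟨htp, -⟩
  rcases Finset.mem_filter.1 htp with ⟨-, hNE, htgt⟩
  have hpavail : p ∈ gsAvail Ps R t := htgt ▸ (gsTarget_spec Ps r hNE).1
  rcases Finset.mem_filter.1 hpavail with ⟨hpPs, hpR⟩
  have hpstep : p ∈ gsAvail Ps (gsStep Ps cap r q R) t := by
    refine Finset.mem_filter.2 ⟨hpPs, fun hc => ?_⟩
    rcases (gsStep_mem Ps cap r q).1 hc with h | ⟨-, h2, h3⟩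
    · exact hpR h
    · rw [← h2] at ht; exact h3 (htgt ▸ ht)
  have hNE' : (gsAvail Ps (gsStep Ps cap r q R) t).Nonempty := ⟨p, hpstep⟩
  refine Finset.mem_filter.2 ⟨Finset.mem_univ _, hNE', ?_⟩
  -- the new target equals p, by injectivity of r t on Ps
  have hspec := gsTarget_spec Ps r hNE'
  have hmem : gsTarget Ps r (gsStep Ps cap r q R) t ∈ gsAvail Ps R t :=
    gsAvail_anti Ps cap r q hspec.1
  have h1 : r t p ≤ r t (gsTarget Ps r (gsStep Ps cap r q R) t) := by
    have := (gsTarget_spec Ps r hNE).2 _ hmem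
    rw [htgt] at this; exact this
  have h2 : r t (gsTarget Ps r (gsStep Ps cap r q R) t) ≤ r t p := hspec.2 _ hpstep
  exact hr t (Finset.mem_filter.1 hspec.1).1 hpPs (le_antisymm h2 h1)

lemma gsQ_injOn (hq : ∀ p, Function.Injective (q p)) (p : P) (A : Finset S) :
    Set.InjOn (q p) A := (hq p).injOn

lemma gsJ_step (hr : ∀ s, Set.InjOn (r s) Ps) (hq : ∀ p, Function.Injective (q p))
    {R : Finset (S × P)} (hJ : gsJ Ps cap r q R) :
    gsJ Ps cap r q (gsStep Ps cap r q R) := by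
  intro s p hsp
  -- in both cases there are at least `cap p` current proposers better than `s`
  have h1 : cap p ≤ ((gsProposers Ps r R p).filter fun t => q p t < q p s).card := by
    rcases (gsStep_mem Ps cap r q).1 hsp with h | ⟨hNE, htgt, hnk⟩
    · exact hJ s p h
    · have hsprop : s ∈ gsProposers Ps r R p :=
        Finset.mem_filter.2 ⟨Finset.mem_univ _, hNE, htgt⟩
      rw [gsKeep, Finset.mem_filter] at hnk
      push_neg at hnk
      exact hnk hsprop
  have hcapA : cap p ≤ (gsProposers Ps r R p).card :=
    le_trans h1 (Finset.card_le_card (Finset.filter_subset _ _))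
  have hkeepcard : cap p ≤ (gsKeep Ps cap r q R p).card :=
    topk_card_ge (gsQ_injOn q hq p _) hcapA
  have hbetter : ∀ t ∈ gsKeep Ps cap r q R p, q p t < q p s :=
    topk_better (gsQ_injOn q hq p _) h1
  have hsub : gsKeep Ps cap r q R p ⊆
      (gsProposers Ps r (gsStep Ps cap r q R) p).filter fun t => q p t < q p s := by
    intro t ht
    exact Finset.mem_filter.2 ⟨gsKeep_proposes Ps cap r q hr ht, hbetter t ht⟩
  exact le_trans hkeepcard (Finset.card_le_card hsub)

lemma gsAvail_nonempty [Nonempty S] (hq : ∀ p, Function.Injective (q p))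
    (hsum : ∑ p ∈ Ps, cap p = Fintype.card S)
    {R : Finset (S × P)} (hJ : gsJ Ps cap r q R) (s : S) :
    (gsAvail Ps R s).Nonempty := by
  by_contra hne
  have hall : ∀ p ∈ Ps, (s, p) ∈ R := by
    intro p hp
    by_contra hc
    exact hne ⟨p, Finset.mem_filter.2 ⟨hp, hc⟩⟩
  set K : P → Finset S := fun p => (gsProposers Ps r R p).filter fun t => q p t < q p s with hK
  have hcap : ∀ p ∈ Ps, cap p ≤ (K p).card := fun p hp => hJ s p (hall p hp)
  have hdisj : ∀ p₁ ∈ Ps, ∀ p₂ ∈ Ps, p₁ ≠ p₂ → Disjoint (K p₁) (K p₂) := by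
    intro p₁ _ p₂ _ hne12
    rw [Finset.disjoint_left]
    intro t ht1 ht2
    have e1 := (Finset.mem_filter.1 (Finset.mem_filter.1 ht1).1).2.2
    have e2 := (Finset.mem_filter.1 (Finset.mem_filter.1 ht2).1).2.2
    exact hne12 (e1 ▸ e2 ▸ rfl)
  have hsum2 : ∑ p ∈ Ps, (K p).card = (Ps.biUnion K).card :=
    (Finset.card_biUnion hdisj).symm
  have hsubset : Ps.biUnion K ⊆ Finset.univ.erase s := by
    intro t ht
    rcases Finset.mem_biUnion.1 ht with ⟨p, hp, htp⟩
    have := (Finset.mem_filter.1 htp).2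
    exact Finset.mem_erase.2 ⟨fun he => by subst he; exact lt_irrefl _ this, Finset.mem_univ _⟩
  have hle := Finset.card_le_card hsubset
  rw [Finset.card_erase_of_mem (Finset.mem_univ s), Finset.card_univ] at hle
  have h0 : 0 < Fintype.card S := Fintype.card_pos
  have : Fintype.card S ≤ ∑ p ∈ Ps, (K p).card := by
    rw [← hsum]; exact Finset.sum_le_sum hcap
  omega

lemma gsExists_fixed (hr : ∀ s, Set.InjOn (r s) Ps) (hq : ∀ p, Function.Injective (q p)) :
    ∃ R : Finset (S × P), gsJ Ps cap r q R ∧ gsStep Ps cap r q R = R := by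
  by_contra hc
  push_neg at hc
  set F : ℕ → Finset (S × P) := fun k => (gsStep Ps cap r q)^[k] ∅ with hF
  have hFsucc : ∀ k, F (k + 1) = gsStep Ps cap r q (F k) := fun k =>
    Function.iterate_succ_apply' _ _ _
  have hJall : ∀ k, gsJ Ps cap r q (F k) := by
    intro k
    induction k with
    | zero => intro s p h; exact absurd h (Finset.notMem_empty _)
    | succ n ih => rw [hFsucc]; exact gsJ_step Ps cap r q hr hq ih
  have hbound : ∀ k, F k ⊆ Finset.univ ×ˢ Ps := by
    intro k
    induction k with
    | zero => exact Finset.empty_subset _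
    | succ n ih =>
      rw [hFsucc]
      intro x hx
      rcases (gsStep_mem Ps cap r q).1 (by exact hx) with h | ⟨hNE, htgt, -⟩
      · exact ih h
      · refine Finset.mem_product.2 ⟨Finset.mem_univ _, ?_⟩
        have := (gsTarget_spec Ps r hNE).1
        rw [htgt] at this
        exact (Finset.mem_filter.1 this).1
  have hmono : ∀ k, k ≤ (F k).card := by
    intro k
    induction k with
    | zero => exact Nat.zero_le _
    | succ n ih =>
      have hss : F n ⊂ F (n + 1) := by
        rw [hFsucc]
        exact Finset.ssubset_iff_subset_ne.2
          ⟨gsSubset_step Ps cap r q _, fun he => hc (F n) (hJall n) he.symm⟩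
      have := Finset.card_lt_card hss
      omega
  have := hmono (((Finset.univ : Finset S) ×ˢ Ps).card + 1)
  have := Finset.card_le_card (hbound (((Finset.univ : Finset S) ×ˢ Ps).card + 1))
  omega

lemma gsMain [Nonempty S]
    (hr : ∀ s, Set.InjOn (r s) Ps) (hq : ∀ p, Function.Injective (q p))
    (hsum : ∑ p ∈ Ps, cap p = Fintype.card S) :
    ∃ M : S → P, (∀ s, M s ∈ Ps) ∧
      (∀ p ∈ Ps, (Finset.univ.filter fun s => M s = p).card = cap p) ∧
      ∀ s p, ¬ (r s p < r s (M s) ∧ ∃ t, M t = p ∧ q p s < q p t) := by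
  obtain ⟨R, hJ, hfix⟩ := gsExists_fixed Ps cap r q hr hq
  have hA : ∀ s, (gsAvail Ps R s).Nonempty := gsAvail_nonempty Ps cap r q hq hsum hJ
  set M : S → P := fun s => gsTarget Ps r R s with hM
  have hMPs : ∀ s, M s ∈ Ps := fun s => (Finset.mem_filter.1 (gsTarget_spec Ps r (hA s)).1).1
  have hfiber : ∀ p, (Finset.univ.filter fun s => M s = p) = gsProposers Ps r R p := by
    intro p
    ext t
    simp only [gsProposers, Finset.mem_filter, Finset.mem_univ, true_and]
    exact ⟨fun h => ⟨hA t, h⟩, fun h => h.2⟩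
  have hpk : ∀ p, gsProposers Ps r R p = gsKeep Ps cap r q R p := by
    intro p
    apply Finset.Subset.antisymm
    · intro t ht
      by_contra hnk
      have hrej : (t, p) ∈ gsStep Ps cap r q R := by
        rcases Finset.mem_filter.1 ht with ⟨-, hNE, htgt⟩
        exact (gsStep_mem Ps cap r q).2 (Or.inr ⟨hNE, htgt, hnk⟩)
      rw [hfix] at hrej
      rcases Finset.mem_filter.1 ht with ⟨-, hNE, htgt⟩
      have := (gsTarget_spec Ps r hNE).1
      rw [htgt] at this
      exact (Finset.mem_filter.1 this).2 hrej
    · exact Finset.filter_subset _ _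
  have hle : ∀ p, (Finset.univ.filter fun s => M s = p).card ≤ cap p := by
    intro p
    rw [hfiber, hpk]
    exact topk_card_le (gsQ_injOn q hq p _)
  have hcards : ∀ p ∈ Ps, (Finset.univ.filter fun s => M s = p).card = cap p := by
    have hsum1 : ∑ p ∈ Ps, (Finset.univ.filter fun s => M s = p).card = Fintype.card S := by
      rw [← Finset.card_univ]
      exact (Finset.card_eq_sum_card_fiberwise fun s _ => hMPs s).symm
    intro p hp
    by_contra hne
    have hlt : (Finset.univ.filter fun s => M s = p).card < cap p :=
      lt_of_le_of_ne (hle p) hne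
    have : ∑ p ∈ Ps, (Finset.univ.filter fun s => M s = p).card < ∑ p ∈ Ps, cap p :=
      Finset.sum_lt_sum (fun i _ => hle i) ⟨p, hp, hlt⟩
    omega
  refine ⟨M, hMPs, hcards, ?_⟩
  rintro s p ⟨hlt, t, hMt, hqlt⟩
  have hpPs : p ∈ Ps := hMt ▸ hMPs t
  by_cases hR : (s, p) ∈ R
  · have hJs := hJ s p hR
    have hfull : ((gsProposers Ps r R p).filter fun u => q p u < q p s) =
        gsProposers Ps r R p := by
      apply Finset.eq_of_subset_of_card_le (Finset.filter_subset _ _)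
      have : (gsProposers Ps r R p).card = cap p := by
        rw [← hfiber]; exact hcards p hpPs
      omega
    have htprop : t ∈ gsProposers Ps r R p := by rw [← hfiber]; simp [hMt]
    rw [← hfull] at htprop
    have := (Finset.mem_filter.1 htprop).2
    omega
  · have hpav : p ∈ gsAvail Ps R s := Finset.mem_filter.2 ⟨hpPs, hR⟩
    exact absurd hlt (not_lt.2 ((gsTarget_spec Ps r (hA s)).2 p hpav))

end GS

/-- Every admissions instance with exact quotas (witnessed by a feasible assignment)
admits a stable assignment with the same quotas. -/
lemma coreStable {S P : Type*} [Fintype S] (cap : P → ℕ)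
    (sRank : S → P → ℕ) (pRank : P → S → ℕ) (M0 : S → P)
    (h0 : ∀ p, (Finset.univ.filter fun s => M0 s = p).card = cap p) :
    ∃ M : S → P, (∀ p, (Finset.univ.filter fun s => M s = p).card = cap p) ∧
      ∀ s p, ¬ BlockingPair sRank pRank M s p := by
  rcases isEmpty_or_nonempty S with hS | hS
  · exact ⟨M0, h0, fun s => isEmptyElim s⟩
  · set Ps : Finset P := Finset.univ.image M0 with hPs
    haveI : Nonempty P := ⟨M0 (Classical.arbitrary S)⟩
    set B : ℕ := Ps.card with hB
    set n : ℕ := Fintype.card S with hn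
    -- injective indexings
    set idx : P → ℕ := fun p => if h : p ∈ Ps then ((Ps.equivFin ⟨p, h⟩ : Fin _) : ℕ) else 0
      with hidx
    set jdx : S → ℕ := fun s => ((Fintype.equivFin S s : Fin _) : ℕ) with hjdx
    have hidx_lt : ∀ p, idx p < B + 1 := by
      intro p
      simp only [hidx]
      by_cases h : p ∈ Ps
      · rw [dif_pos h]
        have := (Ps.equivFin ⟨p, h⟩).isLt
        omega
      · rw [dif_neg h]; omega
    have hjdx_lt : ∀ s, jdx s < n + 1 := by
      intro s
      simp only [hjdx]
      have := (Fintype.equivFin S s).isLt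
      omega
    set r : S → P → ℕ := fun s p => sRank s p * (B + 1) + idx p with hr
    set q : P → S → ℕ := fun p s => pRank p s * (n + 1) + jdx s with hq
    have hrmono : ∀ s p p', sRank s p < sRank s p' → r s p < r s p' := by
      intro s p p' h
      have h1 := hidx_lt p
      calc sRank s p * (B + 1) + idx p < (sRank s p + 1) * (B + 1) := by
            rw [add_mul, one_mul]; omega
        _ ≤ sRank s p' * (B + 1) := Nat.mul_le_mul_right _ h
        _ ≤ sRank s p' * (B + 1) + idx p' := Nat.le_add_right _ _
    have hqmono : ∀ p s s', pRank p s < pRank p s' → q p s < q p s' := by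
      intro p s s' h
      have h1 := hjdx_lt s
      calc pRank p s * (n + 1) + jdx s < (pRank p s + 1) * (n + 1) := by
            rw [add_mul, one_mul]; omega
        _ ≤ pRank p s' * (n + 1) := Nat.mul_le_mul_right _ h
        _ ≤ pRank p s' * (n + 1) + jdx s' := Nat.le_add_right _ _
    have hrinj : ∀ s, Set.InjOn (r s) Ps := by
      intro s p hp p' hp' heq
      have h1 := hidx_lt p
      have h2 := hidx_lt p'
      have heq' : sRank s p * (B + 1) + idx p = sRank s p' * (B + 1) + idx p' := heq
      have hidxeq : idx p = idx p' := by
        have e1 : (sRank s p * (B + 1) + idx p) % (B + 1) = idx p := by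
          rw [Nat.mul_add_mod']; exact Nat.mod_eq_of_lt h1
        have e2 : (sRank s p' * (B + 1) + idx p') % (B + 1) = idx p' := by
          rw [Nat.mul_add_mod']; exact Nat.mod_eq_of_lt h2
        rw [← e1, ← e2, heq']
      have hp2 : p ∈ Ps := hp
      have hp2' : p' ∈ Ps := hp'
      simp only [hidx, dif_pos hp2, dif_pos hp2'] at hidxeq
      have : Ps.equivFin ⟨p, hp2⟩ = Ps.equivFin ⟨p', hp2'⟩ := Fin.ext hidxeq
      have := (Ps.equivFin).injective this
      exact congrArg Subtype.val this
    have hqinj : ∀ p, Function.Injective (q p) := by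
      intro p s s' heq
      have h1 := hjdx_lt s
      have h2 := hjdx_lt s'
      have heq' : pRank p s * (n + 1) + jdx s = pRank p s' * (n + 1) + jdx s' := heq
      have hjdxeq : jdx s = jdx s' := by
        have e1 : (pRank p s * (n + 1) + jdx s) % (n + 1) = jdx s := by
          rw [Nat.mul_add_mod']; exact Nat.mod_eq_of_lt h1
        have e2 : (pRank p s' * (n + 1) + jdx s') % (n + 1) = jdx s' := by
          rw [Nat.mul_add_mod']; exact Nat.mod_eq_of_lt h2
        rw [← e1, ← e2, heq']
      simp only [hjdx] at hjdxeq
      exact (Fintype.equivFin S).injective (Fin.ext hjdxeq)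
    have hsum : ∑ p ∈ Ps, cap p = n := by
      have : ∀ p ∈ Ps, cap p = (Finset.univ.filter fun s => M0 s = p).card :=
        fun p _ => (h0 p).symm
      rw [Finset.sum_congr rfl this, hn, ← Finset.card_univ]
      exact (Finset.card_eq_sum_card_fiberwise
        fun s _ => Finset.mem_image.2 ⟨s, Finset.mem_univ s, rfl⟩).symm
    obtain ⟨M, hMPs, hMcards, hMstable⟩ := gsMain Ps cap r q hrinj hqinj hsum
    refine ⟨M, ?_, ?_⟩
    · intro p
      by_cases hp : p ∈ Ps
      · exact hMcards p hp
      · have h1 : (Finset.univ.filter fun s => M s = p) = ∅ := by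
          rw [Finset.filter_eq_empty_iff]
          intro s _ he
          exact hp (he ▸ hMPs s)
        have h2 : cap p = 0 := by
          rw [← h0 p, Finset.card_eq_zero, Finset.filter_eq_empty_iff]
          intro s _ he
          exact hp (Finset.mem_image.2 ⟨s, Finset.mem_univ s, he⟩)
        rw [h1, h2, Finset.card_empty]
    · rintro s p ⟨hlt, t, hMt, hqlt⟩
      exact hMstable s p ⟨hrmono s p (M s) hlt, t, hMt, hqmono p s t hqlt⟩

lemma subtype_fiber_card {S P L : Type*} [Fintype S] (loc : S → L) (M0 : S → P)
    (ℓ : L) (p : P) :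
    (Finset.univ.filter fun t : {s : S // loc s = ℓ} => M0 t.1 = p).card =
      (Finset.univ.filter fun s : S => M0 s = p ∧ loc s = ℓ).card := by
  classical
  apply Finset.card_bij (fun (t : {s : S // loc s = ℓ}) _ => t.1)
  · intro a ha
    exact Finset.mem_filter.2 ⟨Finset.mem_univ _, (Finset.mem_filter.1 ha).2, a.2⟩
  · intro a _ b _ h
    exact Subtype.ext h
  · intro b hb
    rcases Finset.mem_filter.1 hb with ⟨-, h1, h2⟩
    exact ⟨⟨b, h2⟩, Finset.mem_filter.2 ⟨Finset.mem_univ _, h1⟩, rfl⟩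

theorem stmt4' {S P L : Type*} [Fintype S]
    (loc : S → L) (cap : P → ℕ) (sRank : S → P → ℕ) (pRank : P → S → ℕ)
    (hfeas : ∃ M, Feasible loc cap M) :
    ∃ M, Feasible loc cap M ∧
      ∀ s p, (∃ t, M t = p ∧ loc t = loc s) → ¬ BlockingPair sRank pRank M s p := by
  classical
  obtain ⟨M0, h0card, h0loc⟩ := hfeas
  have hcore : ∀ ℓ : L, ∃ Mℓ : {s : S // loc s = ℓ} → P,
      (∀ p, (Finset.univ.filter fun t : {s : S // loc s = ℓ} => Mℓ t = p).card
          = (Finset.univ.filter fun s : S => M0 s = p ∧ loc s = ℓ).card) ∧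
      ∀ t p, ¬ BlockingPair (fun (t : {s : S // loc s = ℓ}) p => sRank t.1 p)
        (fun p (t : {s : S // loc s = ℓ}) => pRank p t.1) Mℓ t p := by
    intro ℓ
    exact coreStable _ _ _ (fun t => M0 t.1) (fun p => subtype_fiber_card loc M0 ℓ p)
  choose F hF1 hF2 using hcore
  set M : S → P := fun s => F (loc s) ⟨s, rfl⟩ with hM
  have key : ∀ (t : S) (ℓ : L) (h : loc t = ℓ), F ℓ ⟨t, h⟩ = M t := by
    rintro t ℓ rfl
    rfl
  have hwit : ∀ s p, M s = p → ∃ u, M0 u = p ∧ loc u = loc s := by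
    intro s p hsp
    have h1 : (⟨s, rfl⟩ : {t // loc t = loc s}) ∈ Finset.univ.filter
        (fun t : {t // loc t = loc s} => F (loc s) t = p) :=
      Finset.mem_filter.2 ⟨Finset.mem_univ _, hsp⟩
    have h2 := hF1 (loc s) p
    have hpos : 0 < (Finset.univ.filter fun u : S => M0 u = p ∧ loc u = loc s).card := by
      rw [← h2]
      exact Finset.card_pos.2 ⟨_, h1⟩
    obtain ⟨u, hu⟩ := Finset.card_pos.1 hpos
    exact ⟨u, (Finset.mem_filter.1 hu).2⟩
  have hlocM : ∀ s t, M s = M t → loc s = loc t := by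
    intro s t h
    obtain ⟨u, hu1, hu2⟩ := hwit s (M s) rfl
    obtain ⟨v, hv1, hv2⟩ := hwit t (M t) rfl
    rw [← h] at hv1
    rw [← hu2, ← hv2]
    exact h0loc u v (hu1.trans hv1.symm)
  have hpt : ∀ p ℓ, (Finset.univ.filter fun s : S => M s = p ∧ loc s = ℓ).card
      = (Finset.univ.filter fun s : S => M0 s = p ∧ loc s = ℓ).card := by
    intro p ℓ
    rw [← hF1 ℓ p]
    apply Finset.card_bij
      (fun (s : S) (hs : s ∈ Finset.univ.filter fun s : S => M s = p ∧ loc s = ℓ) =>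
        (⟨s, (Finset.mem_filter.1 hs).2.2⟩ : {s : S // loc s = ℓ}))
    · intro a ha
      refine Finset.mem_filter.2 ⟨Finset.mem_univ _, ?_⟩
      rw [key a ℓ (Finset.mem_filter.1 ha).2.2]
      exact (Finset.mem_filter.1 ha).2.1
    · intro a _ b _ h
      exact congrArg Subtype.val h
    · intro b hb
      refine ⟨b.1, Finset.mem_filter.2 ⟨Finset.mem_univ _, ?_, b.2⟩, Subtype.ext rfl⟩
      rw [← key b.1 ℓ b.2]
      exact (Finset.mem_filter.1 hb).2
  have hcardM : ∀ p, (Finset.univ.filter fun s : S => M s = p).card = cap p := by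
    intro p
    have e1 : (Finset.univ.filter fun s : S => M s = p).card =
        ∑ ℓ ∈ Finset.univ.image loc,
          (Finset.univ.filter fun s : S => M s = p ∧ loc s = ℓ).card := by
      rw [Finset.card_eq_sum_card_fiberwise
        (f := loc) (t := Finset.univ.image loc)
        (fun x _ => Finset.mem_image.2 ⟨x, Finset.mem_univ x, rfl⟩)]
      congr 1
      ext ℓ
      rw [Finset.filter_filter]
    have e2 : (Finset.univ.filter fun s : S => M0 s = p).card =
        ∑ ℓ ∈ Finset.univ.image loc,
          (Finset.univ.filter fun s : S => M0 s = p ∧ loc s = ℓ).card := by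
      rw [Finset.card_eq_sum_card_fiberwise
        (f := loc) (t := Finset.univ.image loc)
        (fun x _ => Finset.mem_image.2 ⟨x, Finset.mem_univ x, rfl⟩)]
      congr 1
      ext ℓ
      rw [Finset.filter_filter]
    rw [e1, Finset.sum_congr rfl fun ℓ _ => hpt p ℓ, ← e2, h0card p]
  refine ⟨M, ⟨hcardM, hlocM⟩, ?_⟩
  rintro s p ⟨t, hMt, hlt⟩ ⟨h1, t0, ht0, h2⟩
  have hl0 : loc t0 = loc s := by
    rw [← hlt]
    exact hlocM t0 t (ht0.trans hMt.symm)
  exact hF2 (loc s) ⟨s, rfl⟩ p ⟨h1, ⟨t0, hl0⟩, by rw [key t0 (loc s) hl0]; exact ht0, h2⟩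

/-- Every LRSM instance that admits a feasible matching admits an l-stable matching:
a feasible matching with no blocking pair `(s, p)` in which `s` is collocated with
the students matched to `p`. -/
theorem stmt4 {S P L : Type*} [Fintype S]
    (loc : S → L) (cap : P → ℕ) (sRank : S → P → ℕ) (pRank : P → S → ℕ)
    (hfeas : ∃ M, Feasible loc cap M) :
    ∃ M, Feasible loc cap M ∧
      ∀ s p, (∃ t, M t = p ∧ loc t = loc s) → ¬ BlockingPair sRank pRank M s p := by
  exact stmt4' loc cap sRank pRank hfeas
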